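/- Let A be an integral domain and let J ⊆ A be an ideal such that the ideal (J) of the power series ring A⟦t⟧ generated by the image of J is a proper ideal. Let I₁, …, I_u be prime ideals of A⟦t⟧ such that for every j one has t ∈ I_j and (J) + (t) ⊄ I_j (where (t) is the principal ideal generated by the power series variable t). Then: (1) (J) is not contained in the union I₁ ∪ ⋯ ∪ I_u; (2) the set (J) \ ((J) ∩ (I₁ ∪ ⋯ ∪ I_u)) is infinite; (3) for every element c of (J) \ ((J) ∩ (I₁ ∪ ⋯ ∪ I_u)) and every j, one has t + c ∉ I_j. -/

import Mathlib

/-- Let `A` be an integral domain and `J ⊆ A` an ideal such that the ideal `(J)` of `A⟦t⟧`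
generated by the image of `J` is proper.  Let `I₁, …, I_u` be prime ideals of `A⟦t⟧`, each
containing `t` and not containing `(J) + (t)`.  Then `(J)` is not contained in the union of
the `I_j`, the set `(J) \ ((J) ∩ (I₁ ∪ ⋯ ∪ I_u))` is infinite, and for every `c` in this set
and every `j` we have `t + c ∉ I_j`. -/
theorem powerSeries_prime_avoidance_translates
    {A : Type*} [CommRing A] [IsDomain A] (J : Ideal A)
    (u : ℕ) (hu : 0 < u) (I : Fin u → Ideal (PowerSeries A))
    (hproper : Ideal.map ((PowerSeries.C : A →+* PowerSeries A)) J ≠ ⊤)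
    (hprime : ∀ j, (I j).IsPrime)
    (htmem : ∀ j, (PowerSeries.X : PowerSeries A) ∈ I j)
    (hnle : ∀ j, ¬(Ideal.map ((PowerSeries.C : A →+* PowerSeries A)) J ⊔
      Ideal.span {(PowerSeries.X : PowerSeries A)} ≤ I j)) :
    (¬((Ideal.map ((PowerSeries.C : A →+* PowerSeries A)) J : Set (PowerSeries A)) ⊆
        ⋃ j, (I j : Set (PowerSeries A)))) ∧
    Set.Infinite ((Ideal.map ((PowerSeries.C : A →+* PowerSeries A)) J : Set (PowerSeries A)) \
      ((Ideal.map ((PowerSeries.C : A →+* PowerSeries A)) J : Set (PowerSeries A)) ∩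
        ⋃ j, (I j : Set (PowerSeries A)))) ∧
    (∀ c ∈ (Ideal.map ((PowerSeries.C : A →+* PowerSeries A)) J : Set (PowerSeries A)) \
        ((Ideal.map ((PowerSeries.C : A →+* PowerSeries A)) J : Set (PowerSeries A)) ∩
          ⋃ j, (I j : Set (PowerSeries A))),
      ∀ j, PowerSeries.X + c ∉ I j) := by
  set JJ := Ideal.map ((PowerSeries.C : A →+* PowerSeries A)) J with hJJ
  -- part 1 : prime avoidance
  have h1 : ¬((JJ : Set (PowerSeries A)) ⊆ ⋃ j, (I j : Set (PowerSeries A))) := by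
    intro h
    have h' : (JJ : Set (PowerSeries A)) ⊆ ⋃ j ∈ Finset.univ, (I j : Set (PowerSeries A)) := by
      simpa using h
    obtain ⟨i, -, hi⟩ :=
      (Ideal.subset_union_prime (⟨0, hu⟩ : Fin u) (⟨0, hu⟩ : Fin u)
        (fun i _ _ _ => hprime i)).mp h'
    exact hnle i (sup_le hi (Ideal.span_le.mpr (by simpa using htmem i)))
  refine ⟨h1, ?_, ?_⟩
  · -- part 2 : infiniteness
    obtain ⟨c, hcJ, hcU⟩ := Set.not_subset.mp h1
    have hcU' : ∀ j, c ∉ I j := by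
      intro j hj
      exact hcU (Set.mem_iUnion.mpr ⟨j, hj⟩)
    have hc0 : c ≠ 0 := by
      intro h
      exact hcU' ⟨0, hu⟩ (h ▸ (I ⟨0, hu⟩).zero_mem)
    refine Set.infinite_of_injective_forall_mem
      (f := fun n : ℕ => c * (1 + PowerSeries.X ^ (n + 1))) ?_ ?_
    · intro n m hnm
      simp only at hnm
      have h2 : (1 + PowerSeries.X ^ (n + 1) : PowerSeries A)
          = 1 + PowerSeries.X ^ (m + 1) := mul_left_cancel₀ hc0 hnm
      have h3 : (PowerSeries.X ^ (n + 1) : PowerSeries A) = PowerSeries.X ^ (m + 1) := by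
        have := add_left_cancel h2
        exact this
      have h4 := congrArg (PowerSeries.coeff (R := A) (n + 1)) h3
      simp only [PowerSeries.coeff_X_pow] at h4
      by_contra hne
      have hne' : n + 1 ≠ m + 1 := by omega
      simp [hne'] at h4
      exact hne h4
    · intro n
      have hmemJ : c * (1 + PowerSeries.X ^ (n + 1)) ∈ JJ :=
        Ideal.mul_mem_right _ _ hcJ
      have hnotU : c * (1 + PowerSeries.X ^ (n + 1)) ∉
          ⋃ j, (I j : Set (PowerSeries A)) := by
        rw [Set.mem_iUnion]
        rintro ⟨j, hj⟩
        rcases (hprime j).mem_or_mem hj with h | h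
        · exact hcU' j h
        · have hx : (PowerSeries.X : PowerSeries A) ^ (n + 1) ∈ I j :=
            Ideal.pow_mem_of_mem _ (htmem j) _ (Nat.succ_pos n)
          have hone : (1 : PowerSeries A) ∈ I j := by
            have := (I j).sub_mem h hx
            simpa using this
          exact (hprime j).ne_top (Ideal.eq_top_of_isUnit_mem _ hone isUnit_one)
      exact ⟨hmemJ, fun h => hnotU h.2⟩
  · -- part 3
    rintro c ⟨hcJ, hc⟩ j hmem
    have hcU : c ∉ ⋃ j, (I j : Set (PowerSeries A)) := fun h => hc ⟨hcJ, h⟩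
    have : c ∈ I j := by
      have := (I j).sub_mem hmem (htmem j)
      simpa using this
    exact hcU (Set.mem_iUnion.mpr ⟨j, this⟩)
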